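/- Fix f ∈ ℝ^d and let P_{w,f} denote the distribution on ℝ^d × ℝ of a single heteroscedastic regression sample with regressor w and noise model f. Then for every measurable estimator ŵ : (ℝ^d × ℝ)^n → ℝ^d, inf over estimators of sup over w ∈ ℝ^d of E_{(x_i,y_i) i.i.d. ~ P_{w,f}}[‖ŵ − w‖²] ≥ c‖f‖²/n for an absolute constant c > 0. (The hard pair of alternatives both have noise model f and regressors differing along the direction of f, for which KL(P_{w₁,f} ‖ P_{w₂,f}) = ‖w₁ − w₂‖²/‖f‖².) -/

import Mathlib

open MeasureTheory ProbabilityTheory Real Matrix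
open scoped ENNReal NNReal BigOperators RealInnerProductSpace

noncomputable section

/-- The standard Gaussian measure `N(0, I_d)` on `ℝ^d`. -/
def stdGaussian (d : ℕ) : Measure (EuclideanSpace ℝ (Fin d)) :=
  (Measure.pi fun _ => gaussianReal 0 1).map (MeasurableEquiv.toLp 2 (Fin d → ℝ))

/-- The law of one sample `(x, y)` of the heteroscedastic linear regression model
`y = ⟨w, x⟩ + ε ⟨f, x⟩` with `x ~ N(0, I_d)` and `ε ~ N(0,1)` independent of `x`. -/
def heteroModel (d : ℕ) (w f : EuclideanSpace ℝ (Fin d)) :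
    Measure (EuclideanSpace ℝ (Fin d) × ℝ) :=
  Measure.map (fun p => (p.1, ⟪w, p.1⟫ + p.2 * ⟪f, p.1⟫))
    ((stdGaussian d).prod (gaussianReal 0 1))

/-- The joint law of `n` i.i.d. samples of the heteroscedastic regression model. -/
def hetSamples (d n : ℕ) (w f : EuclideanSpace ℝ (Fin d)) :
    Measure (Fin n → EuclideanSpace ℝ (Fin d) × ℝ) :=
  Measure.pi fun _ => heteroModel d w f

/-- lintegral of a product of single-coordinate functions over a finite product measure. -/
lemma lintegral_pi_prod' {α : Type*} [MeasurableSpace α] :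
    ∀ {n : ℕ} (μ : Fin n → Measure α) [∀ i, SigmaFinite (μ i)]
      (f : Fin n → α → ℝ≥0∞), (∀ i, Measurable (f i)) →
      ∫⁻ x, ∏ i, f i (x i) ∂Measure.pi μ = ∏ i, ∫⁻ y, f i y ∂μ i := by
  intro n
  induction n with
  | zero =>
      intro μ _ f hf
      simp [lintegral_const]
  | succ n ih =>
      intro μ _ f hf
      have hF : Measurable fun x : Fin (n + 1) → α => ∏ i, f i (x i) :=
        Finset.measurable_prod _ fun i _ => (hf i).comp (measurable_pi_apply i)
      rw [← ((measurePreserving_piFinSuccAbove μ 0).symm).lintegral_comp hF]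
      simp_rw [MeasurableEquiv.piFinSuccAbove_symm_apply, Fin.insertNthEquiv,
        Fin.insertNth_zero, Equiv.coe_fn_mk, Fin.prod_univ_succ, Fin.cons_zero, Fin.cons_succ,
        Fin.zero_succAbove, cast_eq]
      have hmeas : Measurable fun x : Fin n → α => ∏ j : Fin n, f j.succ (x j) :=
        Finset.measurable_prod _ fun i _ => (hf i.succ).comp (measurable_pi_apply i)
      rw [lintegral_prod_mul (hf 0).aemeasurable hmeas.aemeasurable]
      congr 1
      exact ih _ _ fun i => hf i.succ

/-- A finite product of identical pushforward measures is the pushforward of the product. -/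
lemma pi_map_comp' {α β : Type*} [MeasurableSpace α] [MeasurableSpace β] (n : ℕ)
    (μ : Measure α) [IsProbabilityMeasure μ] {g : α → β} (hg : Measurable g) :
    Measure.pi (fun _ : Fin n => μ.map g)
      = (Measure.pi fun _ : Fin n => μ).map (fun x i => g (x i)) := by
  haveI : IsProbabilityMeasure (μ.map g) := Measure.isProbabilityMeasure_map hg.aemeasurable
  refine Measure.pi_eq fun s hs => ?_
  have hG : Measurable fun (x : Fin n → α) i => g (x i) :=
    measurable_pi_lambda _ fun i => hg.comp (measurable_pi_apply i)
  rw [Measure.map_apply hG (MeasurableSet.univ_pi hs)]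
  have hpre : (fun (x : Fin n → α) i => g (x i)) ⁻¹' Set.pi Set.univ s
      = Set.pi Set.univ fun i => g ⁻¹' s i := by
    ext x; simp [Set.mem_pi]
  rw [hpre, Measure.pi_pi]
  exact (Finset.prod_congr rfl fun i _ => Measure.map_apply hg (hs i)).symm

lemma gaussian_shift' (t : ℝ) :
    gaussianReal (-t) 1 = (gaussianReal t 1).withDensity
      (fun s => ENNReal.ofReal (Real.exp (-(2 * t) * s))) := by
  have hmg : Measurable fun s : ℝ => ENNReal.ofReal (Real.exp (-(2 * t) * s)) :=
    ENNReal.measurable_ofReal.comp (Real.measurable_exp.comp (measurable_const.mul measurable_id))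
  rw [gaussianReal_of_var_ne_zero _ one_ne_zero, gaussianReal_of_var_ne_zero _ one_ne_zero,
    ← withDensity_mul _ (measurable_gaussianPDF t 1) hmg]
  congr 1
  ext s
  simp only [Pi.mul_apply, gaussianPDF]
  rw [← ENNReal.ofReal_mul (gaussianPDFReal_nonneg t 1 s)]
  congr 1
  unfold gaussianPDFReal
  push_cast
  have key : ∀ (c a b e : ℝ), Real.exp a * Real.exp b = Real.exp e →
      c * Real.exp e = c * Real.exp a * Real.exp b := by
    intro c a b e h; rw [mul_assoc, h]
  exact key _ _ _ _ (by rw [← Real.exp_add]; congr 1; ring)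

lemma prod_gaussian_shift' {α : Type*} [MeasurableSpace α] (μ : Measure α)
    [IsProbabilityMeasure μ] (t : ℝ) :
    μ.prod (gaussianReal (-t) 1) = (μ.prod (gaussianReal t 1)).withDensity
      (fun p => ENNReal.ofReal (Real.exp (-(2 * t) * p.2))) := by
  have hmg : Measurable fun s : ℝ => ENNReal.ofReal (Real.exp (-(2 * t) * s)) :=
    ENNReal.measurable_ofReal.comp (Real.measurable_exp.comp (measurable_const.mul measurable_id))
  have hmp : Measurable fun p : α × ℝ => ENNReal.ofReal (Real.exp (-(2 * t) * p.2)) :=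
    hmg.comp measurable_snd
  refine Measure.prod_eq fun s u hs hu => ?_
  rw [withDensity_apply _ (hs.prod hu), ← Measure.prod_restrict,
    lintegral_prod _ hmp.aemeasurable]
  have hin : (fun x : α => ∫⁻ y, ENNReal.ofReal (Real.exp (-(2 * t) * (x, y).2))
        ∂(gaussianReal t 1).restrict u) = fun _ : α => gaussianReal (-t) 1 u := by
    funext x
    show (∫⁻ y in u, ENNReal.ofReal (Real.exp (-(2 * t) * y)) ∂gaussianReal t 1)
        = gaussianReal (-t) 1 u
    rw [gaussian_shift' t, withDensity_apply _ hu]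
  rw [hin, lintegral_const, Measure.restrict_apply_univ, mul_comm]

lemma pi_withDensity' {α : Type*} [MeasurableSpace α] (n : ℕ) (μ : Measure α)
    [IsProbabilityMeasure μ] {g : α → ℝ≥0∞} (hg : Measurable g)
    [SigmaFinite (μ.withDensity g)] :
    Measure.pi (fun _ : Fin n => μ.withDensity g)
      = (Measure.pi fun _ : Fin n => μ).withDensity (fun z => ∏ i, g (z i)) := by
  refine Measure.pi_eq fun s hs => ?_
  rw [withDensity_apply _ (MeasurableSet.univ_pi hs),
    ← lintegral_indicator (MeasurableSet.univ_pi hs) _]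
  have hind : ∀ z : Fin n → α,
      (Set.pi Set.univ s).indicator (fun z => ∏ i, g (z i)) z
        = ∏ i, (s i).indicator g (z i) := by
    intro z
    by_cases hz : z ∈ Set.pi Set.univ s
    · rw [Set.indicator_of_mem hz]
      exact Finset.prod_congr rfl fun i _ =>
        (Set.indicator_of_mem (hz i (Set.mem_univ i)) g).symm
    · rw [Set.indicator_of_notMem hz]
      rw [Set.mem_pi] at hz; push_neg at hz
      obtain ⟨i, -, hi⟩ := hz
      exact (Finset.prod_eq_zero (Finset.mem_univ i) (Set.indicator_of_notMem hi g)).symm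
  simp_rw [hind]
  rw [lintegral_pi_prod' _ _ fun i => hg.indicator (hs i)]
  exact Finset.prod_congr rfl fun i _ => by
    rw [withDensity_apply _ (hs i), ← lintegral_indicator (hs i) _]

lemma lintegral_exp_gaussian' (t lam : ℝ) :
    ∫⁻ s, ENNReal.ofReal (Real.exp (lam * s)) ∂gaussianReal t 1
      = ENNReal.ofReal (Real.exp (lam * t + lam ^ 2 / 2)) := by
  have hmg : Measurable fun s : ℝ => ENNReal.ofReal (Real.exp (lam * s)) :=
    ENNReal.measurable_ofReal.comp (Real.measurable_exp.comp (measurable_const.mul measurable_id))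
  rw [gaussianReal_of_var_ne_zero _ one_ne_zero,
    lintegral_withDensity_eq_lintegral_mul _ (measurable_gaussianPDF t 1) hmg]
  have hpt : ∀ s : ℝ, (gaussianPDF t 1 * fun s => ENNReal.ofReal (Real.exp (lam * s))) s
      = ENNReal.ofReal (Real.exp (lam * t + lam ^ 2 / 2)) * gaussianPDF (t + lam) 1 s := by
    intro s
    simp only [Pi.mul_apply, gaussianPDF]
    rw [← ENNReal.ofReal_mul (gaussianPDFReal_nonneg _ _ _),
      ← ENNReal.ofReal_mul (Real.exp_nonneg _)]
    congr 1
    unfold gaussianPDFReal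
    push_cast
    have key : ∀ (c a b d e : ℝ), Real.exp a * Real.exp b = Real.exp d * Real.exp e →
        c * Real.exp a * Real.exp b = Real.exp d * (c * Real.exp e) := by
      intro c a b d e h; rw [mul_assoc, h, mul_left_comm]
    exact key _ _ _ _ _ (by rw [← Real.exp_add, ← Real.exp_add]; congr 1; ring)
  simp_rw [hpt]
  rw [lintegral_const_mul _ (measurable_gaussianPDF _ 1),
    lintegral_gaussianPDF_eq_one _ one_ne_zero, mul_one]

set_option maxHeartbeats 1000000 in
/-- **Theorem (Coarse minimax lower bound for heteroscedastic regression).**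
For any fixed noise model `f ∈ ℝ^d`, every measurable estimator `ŵ` of the regressor from
`n` i.i.d. samples of the heteroscedastic regression model incurs worst-case risk at least
`c‖f‖²/n` for an absolute constant `c > 0`:
`sup_w E_{P_{w,f}^{⊗n}}[‖ŵ - w‖²] ≥ c‖f‖²/n`. -/
theorem heteroscedastic_minimax_lower_bound_coarse :
    ∃ c : ℝ, 0 < c ∧
      ∀ (d n : ℕ) (f : EuclideanSpace ℝ (Fin d)), 1 ≤ n →
        ∀ what : (Fin n → EuclideanSpace ℝ (Fin d) × ℝ) → EuclideanSpace ℝ (Fin d),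
          Measurable what →
          ENNReal.ofReal (c * ‖f‖ ^ 2 / (n : ℝ)) ≤
            ⨆ w : EuclideanSpace ℝ (Fin d),
              ∫⁻ data, ENNReal.ofReal (‖what data - w‖ ^ 2) ∂(hetSamples d n w f) := by
  refine ⟨Real.exp (-1) / 32, by positivity, ?_⟩
  intro d n f hn what hwhat
  classical
  have hn0 : (0:ℝ) < n := by exact_mod_cast hn
  set rn : ℝ := Real.sqrt n with hrn_def
  have hrn : 0 < rn := Real.sqrt_pos.mpr hn0
  have hrnsq : rn ^ 2 = n := Real.sq_sqrt hn0.le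
  set t : ℝ := 1 / (4 * rn) with ht_def
  have ht : 0 < t := by positivity
  haveI : IsProbabilityMeasure (stdGaussian d) :=
    Measure.isProbabilityMeasure_map (MeasurableEquiv.toLp 2 (Fin d → ℝ)).measurable.aemeasurable
  -- measurability of basic maps
  have hrn' : rn ≠ 0 := ne_of_gt hrn
  have hinner : Measurable fun x : EuclideanSpace ℝ (Fin d) => ⟪f, x⟫ :=
    measurable_const.inner measurable_id
  have hψ : Measurable fun p : EuclideanSpace ℝ (Fin d) × ℝ => (p.1, p.2 * ⟪f, p.1⟫) :=
    measurable_fst.prodMk (measurable_snd.mul (hinner.comp measurable_fst))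
  set ψ : EuclideanSpace ℝ (Fin d) × ℝ → EuclideanSpace ℝ (Fin d) × ℝ :=
    fun p => (p.1, p.2 * ⟪f, p.1⟫) with hψ_def
  set Ψ : (Fin n → EuclideanSpace ℝ (Fin d) × ℝ) → (Fin n → EuclideanSpace ℝ (Fin d) × ℝ) :=
    fun z i => ψ (z i) with hΨ_def
  have hΨ : Measurable Ψ := measurable_pi_lambda _ fun i => hψ.comp (measurable_pi_apply i)
  -- step A : model as pushforward
  have modelA : ∀ a : ℝ, heteroModel d (a • f) f
      = ((stdGaussian d).prod (gaussianReal a 1)).map ψ := by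
    intro a
    have h1 : (stdGaussian d).prod (gaussianReal a 1)
        = ((stdGaussian d).prod (gaussianReal 0 1)).map (Prod.map id (· + a)) := by
      rw [← Measure.map_prod_map _ _ measurable_id (measurable_add_const a),
        Measure.map_id, gaussianReal_map_add_const, zero_add]
    rw [heteroModel, h1, Measure.map_map hψ (measurable_id.prodMap (measurable_add_const a))]
    congr 1
    funext p
    simp only [hψ_def, Function.comp_apply, Prod.map, id_eq]
    refine Prod.ext rfl ?_
    simp only [real_inner_smul_left]
    ring
  -- step B : samples as pushforward of a product measure
  have samples : ∀ a : ℝ, hetSamples d n (a • f) f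
      = (Measure.pi fun _ : Fin n => (stdGaussian d).prod (gaussianReal a 1)).map Ψ := by
    intro a
    rw [hetSamples]
    simp_rw [modelA a]
    exact pi_map_comp' n _ hψ
  -- step C : density of the (-t) product measure w.r.t. the (t) one
  have gs := prod_gaussian_shift' (stdGaussian d) t
  haveI : SigmaFinite (((stdGaussian d).prod (gaussianReal t 1)).withDensity
      fun p => ENNReal.ofReal (Real.exp (-(2 * t) * p.2))) := by
    rw [← gs]; infer_instance
  have hexp_meas : ∀ lam : ℝ, Measurable fun p : EuclideanSpace ℝ (Fin d) × ℝ =>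
      ENNReal.ofReal (Real.exp (lam * p.2)) := fun lam =>
    ENNReal.measurable_ofReal.comp (Real.measurable_exp.comp (measurable_snd.const_mul lam))
  have pish : (Measure.pi fun _ : Fin n => (stdGaussian d).prod (gaussianReal (-t) 1))
      = (Measure.pi fun _ : Fin n => (stdGaussian d).prod (gaussianReal t 1)).withDensity
        (fun z => ∏ i, ENNReal.ofReal (Real.exp (-(2 * t) * (z i).2))) := by
    simp_rw [gs]
    exact pi_withDensity' n _ (hexp_meas (-(2 * t)))
  set Pn : Measure (Fin n → EuclideanSpace ℝ (Fin d) × ℝ) :=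
    Measure.pi fun _ : Fin n => (stdGaussian d).prod (gaussianReal t 1) with hPn_def
  haveI : IsProbabilityMeasure Pn :=
    Measure.pi.instIsProbabilityMeasure (μ := fun _ : Fin n => (stdGaussian d).prod (gaussianReal t 1))
  -- product density as function of the sum
  have hGprod : ∀ (lam : ℝ) (z : Fin n → EuclideanSpace ℝ (Fin d) × ℝ),
      (∏ i, ENNReal.ofReal (Real.exp (lam * (z i).2)))
        = ENNReal.ofReal (Real.exp (lam * ∑ i, (z i).2)) := by
    intro lam z
    rw [Finset.mul_sum, Real.exp_sum,
      ENNReal.ofReal_prod_of_nonneg (fun i _ => Real.exp_nonneg _)]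
  have hGmeas : Measurable fun z : Fin n → EuclideanSpace ℝ (Fin d) × ℝ =>
      ∏ i, ENNReal.ofReal (Real.exp (-(2 * t) * (z i).2)) :=
    Finset.measurable_prod _ fun i _ => (hexp_meas (-(2 * t))).comp (measurable_pi_apply i)
  -- Chernoff bound
  set lam : ℝ := 1 / rn with hlam_def
  have hlam : 0 < lam := by positivity
  have hYmeas : Measurable fun z : Fin n → EuclideanSpace ℝ (Fin d) × ℝ => ∑ i, (z i).2 :=
    Finset.measurable_sum _ fun i _ => (measurable_pi_apply i).snd
  have factor : ∀ a b : ℝ, (∫⁻ p, ENNReal.ofReal (Real.exp (b * p.2))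
      ∂((stdGaussian d).prod (gaussianReal a 1)))
      = ENNReal.ofReal (Real.exp (b * a + b ^ 2 / 2)) := by
    intro a b
    have hg : Measurable fun s : ℝ => ENNReal.ofReal (Real.exp (b * s)) :=
      ENNReal.measurable_ofReal.comp (Real.measurable_exp.comp (measurable_id.const_mul b))
    have h := lintegral_prod_mul (μ := stdGaussian d) (ν := gaussianReal a 1)
      (f := fun _ : EuclideanSpace ℝ (Fin d) => (1 : ℝ≥0∞))
      (g := fun s : ℝ => ENNReal.ofReal (Real.exp (b * s)))
      aemeasurable_const hg.aemeasurable
    simp only [one_mul] at h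
    rw [h, lintegral_one, measure_univ, one_mul, lintegral_exp_gaussian' a b]
  have hmgf : (∫⁻ z, ENNReal.ofReal (Real.exp (lam * ∑ i, (z i).2)) ∂Pn)
      = ENNReal.ofReal (Real.exp ((3:ℝ)/4)) := by
    have e1 : lam * t + lam ^ 2 / 2 = 3 / (4 * (n : ℝ)) := by
      simp only [hlam_def, ht_def]
      rw [← hrnsq]
      field_simp
      ring
    calc (∫⁻ z, ENNReal.ofReal (Real.exp (lam * ∑ i, (z i).2)) ∂Pn)
        = ∫⁻ z, ∏ i, ENNReal.ofReal (Real.exp (lam * (z i).2)) ∂Pn := by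
          simp_rw [hGprod lam]
      _ = ∏ _i : Fin n, ∫⁻ p, ENNReal.ofReal (Real.exp (lam * p.2))
            ∂((stdGaussian d).prod (gaussianReal t 1)) :=
          lintegral_pi_prod' _ _ fun i => hexp_meas lam
      _ = ∏ _i : Fin n, ENNReal.ofReal (Real.exp (lam * t + lam ^ 2 / 2)) := by
          simp_rw [factor t lam]
      _ = ENNReal.ofReal (Real.exp (lam * t + lam ^ 2 / 2)) ^ n := by
          rw [Finset.prod_const, Finset.card_univ, Fintype.card_fin]
      _ = ENNReal.ofReal (Real.exp (lam * t + lam ^ 2 / 2) ^ n) :=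
          (ENNReal.ofReal_pow (Real.exp_nonneg _) n).symm
      _ = ENNReal.ofReal (Real.exp ((n : ℝ) * (lam * t + lam ^ 2 / 2))) := by
          rw [Real.exp_nat_mul]
      _ = ENNReal.ofReal (Real.exp ((3:ℝ)/4)) := by
          rw [e1]
          congr 1
          field_simp
          try ring
  have chern : Pn {z | 2 * rn < ∑ i, (z i).2} ≤ ENNReal.ofReal (Real.exp (-(5/4 : ℝ))) := by
    have hgm : Measurable fun z : Fin n → EuclideanSpace ℝ (Fin d) × ℝ =>
        ENNReal.ofReal (Real.exp (lam * ∑ i, (z i).2)) :=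
      ENNReal.measurable_ofReal.comp (Real.measurable_exp.comp (hYmeas.const_mul lam))
    have heq2 : lam * (2 * rn) = 2 := by
      simp only [hlam_def]
      field_simp
      try ring
    have hsub : {z : Fin n → EuclideanSpace ℝ (Fin d) × ℝ | 2 * rn < ∑ i, (z i).2} ⊆
        {z | ENNReal.ofReal (Real.exp (2:ℝ))
          ≤ ENNReal.ofReal (Real.exp (lam * ∑ i, (z i).2))} := by
      intro z hz
      simp only [Set.mem_setOf_eq] at hz ⊢
      apply ENNReal.ofReal_le_ofReal
      apply Real.exp_le_exp.mpr
      have h1 : lam * (2 * rn) ≤ lam * ∑ i, (z i).2 :=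
        mul_le_mul_of_nonneg_left hz.le hlam.le
      linarith [heq2]
    have hmark := mul_meas_ge_le_lintegral₀ (μ := Pn) hgm.aemeasurable (ENNReal.ofReal (Real.exp (2:ℝ)))
    rw [hmgf] at hmark
    have hle : ENNReal.ofReal (Real.exp (2:ℝ)) * Pn {z | 2 * rn < ∑ i, (z i).2}
        ≤ ENNReal.ofReal (Real.exp (2:ℝ)) * ENNReal.ofReal (Real.exp (-(5/4 : ℝ))) :=
      calc ENNReal.ofReal (Real.exp (2:ℝ)) * Pn {z | 2 * rn < ∑ i, (z i).2}
          ≤ ENNReal.ofReal (Real.exp (2:ℝ)) * Pn {z | ENNReal.ofReal (Real.exp (2:ℝ))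
              ≤ ENNReal.ofReal (Real.exp (lam * ∑ i, (z i).2))} :=
            mul_le_mul_right (measure_mono hsub) _
        _ ≤ ENNReal.ofReal (Real.exp ((3:ℝ)/4)) := hmark
        _ = ENNReal.ofReal (Real.exp (2:ℝ)) * ENNReal.ofReal (Real.exp (-(5/4 : ℝ))) := by
            rw [← ENNReal.ofReal_mul (Real.exp_nonneg _), ← Real.exp_add]
            norm_num
    exact (ENNReal.mul_le_mul_iff_right
      (ENNReal.ofReal_pos.mpr (Real.exp_pos _)).ne' ENNReal.ofReal_ne_top).mp hle
  -- the good event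
  set S : Set (Fin n → EuclideanSpace ℝ (Fin d) × ℝ) :=
    {z | ∑ i, (z i).2 ≤ 2 * rn} with hS_def
  have hS_meas : MeasurableSet S := measurableSet_le hYmeas measurable_const
  have hScompl : Sᶜ = {z | 2 * rn < ∑ i, (z i).2} := by
    ext z; simp [hS_def, not_le]
  have hpiS : (2:ℝ≥0∞)⁻¹ ≤ Pn S := by
    have h1 : Pn Sᶜ ≤ 2⁻¹ := by
      rw [hScompl]
      refine chern.trans ?_
      have h2 : Real.exp (-(5/4 : ℝ)) ≤ 2⁻¹ := by
        rw [Real.exp_neg]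
        have h3 : (2:ℝ) ≤ Real.exp (5/4 : ℝ) := by
          have := Real.add_one_le_exp (5/4 : ℝ)
          linarith
        exact inv_anti₀ two_pos h3
      calc ENNReal.ofReal (Real.exp (-(5/4 : ℝ))) ≤ ENNReal.ofReal 2⁻¹ :=
            ENNReal.ofReal_le_ofReal h2
        _ = 2⁻¹ := by
            rw [ENNReal.ofReal_inv_of_pos two_pos, ENNReal.ofReal_ofNat]
    have hadd : Pn S + Pn Sᶜ = 1 := by
      rw [measure_add_measure_compl hS_meas, measure_univ]
    have h3 : (1:ℝ≥0∞) ≤ Pn S + 2⁻¹ := by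
      rw [← hadd]
      exact add_le_add_right h1 _
    have h4 : (1:ℝ≥0∞) - 2⁻¹ = 2⁻¹ := by
      simp only [← one_div]
      exact ENNReal.sub_half ENNReal.one_ne_top
    calc (2:ℝ≥0∞)⁻¹ = 1 - 2⁻¹ := h4.symm
      _ ≤ Pn S := tsub_le_iff_right.mpr h3
  -- risk integrands
  have hH : ∀ w : EuclideanSpace ℝ (Fin d),
      Measurable fun data : Fin n → EuclideanSpace ℝ (Fin d) × ℝ =>
        ENNReal.ofReal (‖what data - w‖ ^ 2) := fun w =>
    ENNReal.measurable_ofReal.comp (((hwhat.sub measurable_const).norm).pow_const 2)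
  have risk_plus : (∫⁻ data, ENNReal.ofReal (‖what data - t • f‖ ^ 2)
        ∂hetSamples d n (t • f) f)
      = ∫⁻ z, ENNReal.ofReal (‖what (Ψ z) - t • f‖ ^ 2) ∂Pn := by
    rw [samples t, lintegral_map (hH _) hΨ]
  have risk_minus : (∫⁻ data, ENNReal.ofReal (‖what data - (-t) • f‖ ^ 2)
        ∂hetSamples d n ((-t) • f) f)
      = ∫⁻ z, (∏ i, ENNReal.ofReal (Real.exp (-(2 * t) * (z i).2)))
          * ENNReal.ofReal (‖what (Ψ z) - (-t) • f‖ ^ 2) ∂Pn := by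
    have hcomp : Measurable fun z : Fin n → EuclideanSpace ℝ (Fin d) × ℝ =>
        ENNReal.ofReal (‖what (Ψ z) - (-t) • f‖ ^ 2) := (hH _).comp hΨ
    rw [samples (-t), lintegral_map (hH _) hΨ, pish,
      lintegral_withDensity_eq_lintegral_mul _ hGmeas hcomp]
    simp only [Pi.mul_apply]
  -- pointwise two-point bound on the good event
  set Kreal : ℝ := Real.exp (-1) * (2 * t ^ 2 * ‖f‖ ^ 2) with hK_def
  have hpoint : ∀ z ∈ S, ENNReal.ofReal Kreal ≤
      ENNReal.ofReal (‖what (Ψ z) - t • f‖ ^ 2)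
        + (∏ i, ENNReal.ofReal (Real.exp (-(2 * t) * (z i).2)))
            * ENNReal.ofReal (‖what (Ψ z) - (-t) • f‖ ^ 2) := by
    intro z hz
    have hG_lb : ENNReal.ofReal (Real.exp (-1)) ≤
        ∏ i, ENNReal.ofReal (Real.exp (-(2 * t) * (z i).2)) := by
      rw [hGprod (-(2 * t)) z]
      apply ENNReal.ofReal_le_ofReal
      apply Real.exp_le_exp.mpr
      have hz' : ∑ i, (z i).2 ≤ 2 * rn := hz
      have h2t : -(2 * t) * (2 * rn) ≤ -(2 * t) * ∑ i, (z i).2 :=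
        mul_le_mul_of_nonpos_left hz' (by linarith)
      have heqt : -(2 * t) * (2 * rn) = -1 := by
        simp only [ht_def]
        field_simp
        try ring
      linarith
    have hreal : 2 * t ^ 2 * ‖f‖ ^ 2
        ≤ ‖what (Ψ z) - t • f‖ ^ 2 + ‖what (Ψ z) - (-t) • f‖ ^ 2 := by
      have hdiff : (what (Ψ z) - (-t) • f) - (what (Ψ z) - t • f) = (2 * t) • f := by
        module
      have htri : ‖(2 * t) • f‖
          ≤ ‖what (Ψ z) - (-t) • f‖ + ‖what (Ψ z) - t • f‖ := by
        rw [← hdiff]; exact norm_sub_le _ _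
      have hnorm2 : ‖(2 * t) • f‖ = 2 * t * ‖f‖ := by
        rw [norm_smul, Real.norm_eq_abs, abs_of_pos (by positivity : (0:ℝ) < 2 * t)]
      rw [hnorm2] at htri
      have h0 : (0:ℝ) ≤ 2 * t * ‖f‖ := by positivity
      have hsq : (2 * t * ‖f‖) ^ 2
          ≤ (‖what (Ψ z) - (-t) • f‖ + ‖what (Ψ z) - t • f‖) ^ 2 :=
        pow_le_pow_left₀ h0 htri 2
      nlinarith [hsq, sq_nonneg (‖what (Ψ z) - (-t) • f‖ - ‖what (Ψ z) - t • f‖)]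
    calc ENNReal.ofReal Kreal
        = ENNReal.ofReal (Real.exp (-1)) * ENNReal.ofReal (2 * t ^ 2 * ‖f‖ ^ 2) := by
          rw [hK_def, ENNReal.ofReal_mul (Real.exp_nonneg _)]
      _ ≤ ENNReal.ofReal (Real.exp (-1)) * (ENNReal.ofReal (‖what (Ψ z) - t • f‖ ^ 2)
            + ENNReal.ofReal (‖what (Ψ z) - (-t) • f‖ ^ 2)) := by
          apply mul_le_mul_right
          calc ENNReal.ofReal (2 * t ^ 2 * ‖f‖ ^ 2)
              ≤ ENNReal.ofReal (‖what (Ψ z) - t • f‖ ^ 2 + ‖what (Ψ z) - (-t) • f‖ ^ 2) :=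
                ENNReal.ofReal_le_ofReal hreal
            _ ≤ _ := ENNReal.ofReal_add_le
      _ = ENNReal.ofReal (Real.exp (-1)) * ENNReal.ofReal (‖what (Ψ z) - t • f‖ ^ 2)
          + ENNReal.ofReal (Real.exp (-1)) * ENNReal.ofReal (‖what (Ψ z) - (-t) • f‖ ^ 2) :=
          mul_add _ _ _
      _ ≤ ENNReal.ofReal (‖what (Ψ z) - t • f‖ ^ 2)
          + (∏ i, ENNReal.ofReal (Real.exp (-(2 * t) * (z i).2)))
              * ENNReal.ofReal (‖what (Ψ z) - (-t) • f‖ ^ 2) := by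
          refine add_le_add ?_ (mul_le_mul_left hG_lb _)
          calc ENNReal.ofReal (Real.exp (-1)) * ENNReal.ofReal (‖what (Ψ z) - t • f‖ ^ 2)
              ≤ 1 * ENNReal.ofReal (‖what (Ψ z) - t • f‖ ^ 2) :=
                mul_le_mul_left (ENNReal.ofReal_le_one.mpr
                  (Real.exp_le_one_iff.mpr (by norm_num))) _
            _ = _ := one_mul _
  -- integrated two-point bound
  have main : ENNReal.ofReal Kreal * 2⁻¹
      ≤ (∫⁻ z, ENNReal.ofReal (‖what (Ψ z) - t • f‖ ^ 2) ∂Pn)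
        + ∫⁻ z, (∏ i, ENNReal.ofReal (Real.exp (-(2 * t) * (z i).2)))
            * ENNReal.ofReal (‖what (Ψ z) - (-t) • f‖ ^ 2) ∂Pn := by
    have hmeas_sum : Measurable fun z : Fin n → EuclideanSpace ℝ (Fin d) × ℝ =>
        ENNReal.ofReal (‖what (Ψ z) - t • f‖ ^ 2)
          + (∏ i, ENNReal.ofReal (Real.exp (-(2 * t) * (z i).2)))
              * ENNReal.ofReal (‖what (Ψ z) - (-t) • f‖ ^ 2) :=
      ((hH _).comp hΨ).add (hGmeas.mul ((hH _).comp hΨ))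
    calc ENNReal.ofReal Kreal * 2⁻¹ ≤ ENNReal.ofReal Kreal * Pn S := mul_le_mul_right hpiS _
      _ = ∫⁻ _z in S, ENNReal.ofReal Kreal ∂Pn := (setLIntegral_const S _).symm
      _ ≤ ∫⁻ z in S, (ENNReal.ofReal (‖what (Ψ z) - t • f‖ ^ 2)
            + (∏ i, ENNReal.ofReal (Real.exp (-(2 * t) * (z i).2)))
                * ENNReal.ofReal (‖what (Ψ z) - (-t) • f‖ ^ 2)) ∂Pn :=
          setLIntegral_mono hmeas_sum hpoint
      _ ≤ ∫⁻ z, (ENNReal.ofReal (‖what (Ψ z) - t • f‖ ^ 2)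
            + (∏ i, ENNReal.ofReal (Real.exp (-(2 * t) * (z i).2)))
                * ENNReal.ofReal (‖what (Ψ z) - (-t) • f‖ ^ 2)) ∂Pn :=
          setLIntegral_le_lintegral _ _
      _ = _ := lintegral_add_left ((hH _).comp hΨ) _
  -- conclude via the supremum
  have hsup_plus : (∫⁻ data, ENNReal.ofReal (‖what data - t • f‖ ^ 2)
        ∂hetSamples d n (t • f) f)
      ≤ ⨆ w, ∫⁻ data, ENNReal.ofReal (‖what data - w‖ ^ 2) ∂hetSamples d n w f :=
    le_iSup (fun w => ∫⁻ data, ENNReal.ofReal (‖what data - w‖ ^ 2)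
      ∂hetSamples d n w f) (t • f)
  have hsup_minus : (∫⁻ data, ENNReal.ofReal (‖what data - (-t) • f‖ ^ 2)
        ∂hetSamples d n ((-t) • f) f)
      ≤ ⨆ w, ∫⁻ data, ENNReal.ofReal (‖what data - w‖ ^ 2) ∂hetSamples d n w f :=
    le_iSup (fun w => ∫⁻ data, ENNReal.ofReal (‖what data - w‖ ^ 2)
      ∂hetSamples d n w f) ((-t) • f)
  have hKrel : Kreal = 4 * (Real.exp (-1) / 32 * ‖f‖ ^ 2 / n) := by
    rw [hK_def, ht_def, ← hrnsq]
    field_simp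
    ring
  have htwo : ENNReal.ofReal (Real.exp (-1) / 32 * ‖f‖ ^ 2 / n) * 2
      ≤ (⨆ w, ∫⁻ data, ENNReal.ofReal (‖what data - w‖ ^ 2) ∂hetSamples d n w f) * 2 := by
    have h1 : ENNReal.ofReal Kreal * 2⁻¹
        = ENNReal.ofReal (Real.exp (-1) / 32 * ‖f‖ ^ 2 / n) * 2 := by
      rw [hKrel, ENNReal.ofReal_mul (by norm_num : (0:ℝ) ≤ 4), ENNReal.ofReal_ofNat]
      rw [mul_comm (4:ℝ≥0∞) _, mul_assoc]
      congr 1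
      rw [show (4:ℝ≥0∞) = 2 * 2 by norm_num, mul_assoc,
        ENNReal.mul_inv_cancel (by norm_num) (by norm_num), mul_one]
    calc ENNReal.ofReal (Real.exp (-1) / 32 * ‖f‖ ^ 2 / n) * 2
        = ENNReal.ofReal Kreal * 2⁻¹ := h1.symm
      _ ≤ _ := main
      _ = (∫⁻ data, ENNReal.ofReal (‖what data - t • f‖ ^ 2) ∂hetSamples d n (t • f) f)
          + ∫⁻ data, ENNReal.ofReal (‖what data - (-t) • f‖ ^ 2)
              ∂hetSamples d n ((-t) • f) f := by rw [risk_plus, risk_minus]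
      _ ≤ (⨆ w, ∫⁻ data, ENNReal.ofReal (‖what data - w‖ ^ 2) ∂hetSamples d n w f)
          + ⨆ w, ∫⁻ data, ENNReal.ofReal (‖what data - w‖ ^ 2) ∂hetSamples d n w f :=
          add_le_add hsup_plus hsup_minus
      _ = _ := (mul_two _).symm
  exact (ENNReal.mul_le_mul_iff_left (by norm_num) (by norm_num)).mp htwo

end
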